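/- The free algebra F⟨x,y⟩ on two generators over a field F does not have property τ: for every ε > 0 there exist n, two matrices a, b generating Mₙ(F) as an F-algebra, and a subspace W ⊆ Fⁿ with dim W ≤ n/2 and dim(W + aW + bW) < (1+ε)dim W. -/

import Mathlib

open Module

section Aux
open Matrix

variable {F : Type*} [Field F] {n : ℕ}

def shiftM (n : ℕ) (F : Type*) [Field F] : Matrix (Fin n) (Fin n) F :=
  Matrix.of fun i j => if (j : ℕ) = (i : ℕ) + 1 then 1 else 0

lemma shift_mul_std (i : Fin n) (h : (i : ℕ) + 1 < n) (j : Fin n) :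
    shiftM n F * Matrix.single ⟨(i : ℕ) + 1, h⟩ j 1 = Matrix.single i j 1 := by
  ext r c
  simp only [mul_apply, shiftM, Matrix.of_apply, Matrix.single, ite_mul, one_mul, zero_mul,
    Matrix.of_apply]
  rw [Finset.sum_eq_single (⟨(i : ℕ) + 1, h⟩ : Fin n)]
  · split_ifs <;> simp_all [Fin.ext_iff] <;> omega
  · intro s _ hs
    split_ifs <;> simp_all [Fin.ext_iff] <;> omega
  · simp

lemma std_mul_shift (i j : Fin n) (h : (j : ℕ) + 1 < n) :
    Matrix.single i j 1 * shiftM n F = Matrix.single i ⟨(j : ℕ) + 1, h⟩ 1 := by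
  ext r c
  simp only [mul_apply, shiftM, Matrix.of_apply, Matrix.single, ite_mul, one_mul, zero_mul,
    mul_ite, mul_one, mul_zero, Matrix.of_apply]
  rw [Finset.sum_eq_single j]
  · split_ifs <;> simp_all [Fin.ext_iff] <;> omega
  · intro s _ hs
    split_ifs <;> simp_all [Fin.ext_iff] <;> omega
  · simp

def cornerM (n : ℕ) (F : Type*) [Field F] : Matrix (Fin n) (Fin n) F :=
  Matrix.of fun i j => if (i : ℕ) = n - 1 ∧ (j : ℕ) = 0 then 1 else 0

lemma corner_eq (hn : 0 < n) :
    cornerM n F = Matrix.single (⟨n - 1, by omega⟩ : Fin n) (⟨0, hn⟩ : Fin n) 1 := by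
  ext r c
  simp [cornerM, Matrix.single, Fin.ext_iff, eq_comm]

lemma adjoin_shift_corner (hn : 0 < n) :
    Algebra.adjoin F ({shiftM n F, cornerM n F} : Set (Matrix (Fin n) (Fin n) F)) = ⊤ := by
  set A := Algebra.adjoin F ({shiftM n F, cornerM n F} : Set (Matrix (Fin n) (Fin n) F)) with hA
  have ha : shiftM n F ∈ A := Algebra.subset_adjoin (by simp)
  have hb : cornerM n F ∈ A := Algebra.subset_adjoin (by simp)
  -- E_{i,0} ∈ A, by downward induction
  have hcol : ∀ d (i : Fin n), (i : ℕ) = n - 1 - d → Matrix.single i ⟨0, hn⟩ 1 ∈ A := by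
    intro d
    induction d with
    | zero =>
      intro i hi
      have : i = (⟨n - 1, by omega⟩ : Fin n) := by simp [Fin.ext_iff, hi]
      rw [this, ← corner_eq hn]; exact hb
    | succ d ih =>
      intro i hi
      by_cases hd : n - 1 - d = n - 1 - (d + 1)
      · exact ih i (by omega)
      · have h1 : (i : ℕ) + 1 < n := by omega
        have := ih ⟨(i : ℕ) + 1, h1⟩ (show (i:ℕ)+1 = _ by omega)
        have h2 := shift_mul_std (F := F) i h1 (⟨0, hn⟩ : Fin n)
        rw [← h2]
        exact mul_mem ha this
  have hcol' : ∀ i : Fin n, Matrix.single i ⟨0, hn⟩ 1 ∈ A := fun i =>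
    hcol (n - 1 - i) i (by omega)
  have hstd : ∀ m (hm : m < n) (i : Fin n), Matrix.single i ⟨m, hm⟩ 1 ∈ A := by
    intro m
    induction m with
    | zero => intro hm i; exact hcol' i
    | succ m ih =>
      intro hm i
      rw [← std_mul_shift i ⟨m, by omega⟩ (by simpa using hm)]
      exact mul_mem (ih (by omega) i) ha
  rw [eq_top_iff]
  intro M _
  rw [Matrix.matrix_eq_sum_single M]
  refine sum_mem fun i _ => sum_mem fun j _ => ?_
  rw [show Matrix.single i j (M i j) = M i j • Matrix.single i j 1 by
    simp [Matrix.smul_single]]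
  have := hstd j j.isLt i
  rw [show (⟨(j:ℕ), j.isLt⟩ : Fin n) = j from rfl] at this
  exact Subalgebra.smul_mem _ this _

lemma shift_mulVec_single_zero (hn : 0 < n) :
    (shiftM n F).mulVecLin (Pi.single (⟨0, hn⟩ : Fin n) 1) = 0 := by
  simp only [Matrix.mulVecLin_apply, Matrix.mulVec_single, mul_one]
  funext r
  simp [shiftM]

lemma shift_mulVec_single (j : Fin n) (h : (j : ℕ) ≠ 0) :
    (shiftM n F).mulVecLin (Pi.single j 1) =
      Pi.single (⟨(j : ℕ) - 1, by omega⟩ : Fin n) 1 := by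
  simp only [Matrix.mulVecLin_apply, Matrix.mulVec_single, mul_one, MulOpposite.op_one, one_smul, Matrix.col_apply]
  funext r
  have hj : ((⟨(j : ℕ) - 1, by omega⟩ : Fin n) : ℕ) = (j : ℕ) - 1 := rfl
  simp only [shiftM, Matrix.col_apply, Matrix.of_apply, Pi.single_apply, Fin.ext_iff, hj]
  have h1 := j.isLt
  have h2 := r.isLt
  split_ifs <;> first | rfl | omega

lemma corner_mulVec_single_zero (hn : 0 < n) :
    (cornerM n F).mulVecLin (Pi.single (⟨0, hn⟩ : Fin n) 1) =
      Pi.single (⟨n - 1, by omega⟩ : Fin n) 1 := by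
  simp only [Matrix.mulVecLin_apply, Matrix.mulVec_single, mul_one]
  funext r
  simp only [cornerM, Matrix.of_apply, Pi.single_apply, Fin.ext_iff]
  split_ifs <;> simp_all

lemma corner_mulVec_single (j : Fin n) (h : (j : ℕ) ≠ 0) :
    (cornerM n F).mulVecLin (Pi.single j 1) = 0 := by
  simp only [Matrix.mulVecLin_apply, Matrix.mulVec_single, mul_one, MulOpposite.op_one, one_smul, Matrix.col_apply]
  funext r
  simp only [cornerM, Matrix.col_apply, Matrix.of_apply]
  rw [if_neg (by omega)]
  rfl

theorem free_algebra_not_tau'' (F : Type*) [Field F] :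
    ∀ ε : ℝ, 0 < ε →
      ∃ (n : ℕ) (a b : Matrix (Fin n) (Fin n) F),
        Algebra.adjoin F ({a, b} : Set (Matrix (Fin n) (Fin n) F)) = ⊤ ∧
        ∃ W : Submodule F (Fin n → F),
          (finrank F W : ℝ) ≤ (n : ℝ) / 2 ∧
          ((finrank F ↥(W ⊔ W.map a.mulVecLin ⊔ W.map b.mulVecLin)) : ℝ)
            < (1 + ε) * finrank F W := by
  intro ε hε
  set k : ℕ := ⌈1/ε⌉₊ + 1 with hk
  have hk1 : 1 ≤ k := by omega
  have hεk : 1 < ε * k := by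
    have h1 : (1:ℝ)/ε ≤ ⌈1/ε⌉₊ := Nat.le_ceil _
    have h2 : ((⌈1/ε⌉₊ : ℝ) + 1) = (k : ℝ) := by push_cast [hk]; ring
    have : 1/ε < (k:ℝ) := by rw [← h2]; linarith
    calc 1 = ε * (1/ε) := by field_simp
    _ < ε * k := by apply mul_lt_mul_of_pos_left this hε
  set n : ℕ := 2 * k with hn
  have hn0 : 0 < n := by omega
  refine ⟨n, shiftM n F, cornerM n F, adjoin_shift_corner hn0, ?_⟩
  set emb : Fin k → Fin n := fun i => ⟨(i : ℕ), by omega⟩ with hemb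
  have hinj : Function.Injective emb := fun i j h => by
    simpa [hemb, Fin.ext_iff] using h
  set v : Fin k → (Fin n → F) := fun i => Pi.single (emb i) 1 with hv
  set W : Submodule F (Fin n → F) := Submodule.span F (Set.range v) with hW
  have hli : LinearIndependent F v := by
    have := (Pi.basisFun F (Fin n)).linearIndependent.comp emb hinj
    convert this using 1
    funext i
    simp [hv, Pi.basisFun_apply]
  have hrankW : finrank F W = k := by
    rw [hW, finrank_span_eq_card hli, Fintype.card_fin]
  refine ⟨W, ?_, ?_⟩
  · rw [hrankW]
    rw [hn]
    push_cast
    ring_nf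
    linarith
  · -- the big space is contained in V = W ⊔ span {e_{n-1}}
    set u : Fin n → F := Pi.single (⟨n - 1, by omega⟩ : Fin n) 1 with hu
    set V : Submodule F (Fin n → F) := W ⊔ Submodule.span F {u} with hV
    have hWV : W ≤ V := le_sup_left
    have haW : W.map (shiftM n F).mulVecLin ≤ V := by
      rw [hW, Submodule.map_span_le]
      rintro m ⟨i, rfl⟩
      by_cases h0 : (i : ℕ) = 0
      · have : emb i = ⟨0, hn0⟩ := by simp [hemb, Fin.ext_iff, h0]
        rw [hv]; dsimp only; rw [this, shift_mulVec_single_zero hn0]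
        exact zero_mem V
      · rw [hv]; dsimp only
        rw [shift_mulVec_single (emb i) (by simpa [hemb] using h0)]
        apply hWV
        apply Submodule.subset_span
        refine ⟨⟨(i : ℕ) - 1, by omega⟩, ?_⟩
        simp [hv, hemb]
    have hbW : W.map (cornerM n F).mulVecLin ≤ V := by
      rw [hW, Submodule.map_span_le]
      rintro m ⟨i, rfl⟩
      by_cases h0 : (i : ℕ) = 0
      · have : emb i = ⟨0, hn0⟩ := by simp [hemb, Fin.ext_iff, h0]
        rw [hv]; dsimp only; rw [this, corner_mulVec_single_zero hn0]
        exact Submodule.mem_sup_right (Submodule.subset_span rfl)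
      · rw [hv]; dsimp only
        rw [corner_mulVec_single (emb i) (by simpa [hemb] using h0)]
        exact zero_mem V
    have hle : W ⊔ W.map (shiftM n F).mulVecLin ⊔ W.map (cornerM n F).mulVecLin ≤ V :=
      sup_le (sup_le hWV haW) hbW
    have hrankV : finrank F V ≤ k + 1 := by
      refine le_trans (Submodule.finrank_add_le_finrank_add_finrank _ _) ?_
      have h1 : finrank F (Submodule.span F ({u} : Set (Fin n → F))) ≤ 1 := by
        simpa using finrank_span_le_card ({u} : Set (Fin n → F))
      omega
    have hbig : finrank F ↥(W ⊔ W.map (shiftM n F).mulVecLin ⊔ W.map (cornerM n F).mulVecLin)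
        ≤ k + 1 :=
      le_trans (Submodule.finrank_mono hle) hrankV
    calc ((finrank F ↥(W ⊔ W.map (shiftM n F).mulVecLin ⊔ W.map (cornerM n F).mulVecLin)) : ℝ)
        ≤ (k : ℝ) + 1 := by exact_mod_cast hbig
      _ < (1 + ε) * (k : ℝ) := by nlinarith [hεk]
      _ = (1 + ε) * finrank F W := by rw [hrankW]

end Aux

/-- The free algebra `F⟨x,y⟩` does not have property τ: for every `ε > 0` there are
`n`, matrices `a, b` generating `Mₙ(F)` as an `F`-algebra, and a subspace `W ⊆ Fⁿ`
with `dim W ≤ n/2` and `dim(W + aW + bW) < (1+ε)·dim W`. -/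
theorem free_algebra_not_tau
    (F : Type*) [Field F] :
    ∀ ε : ℝ, 0 < ε →
      ∃ (n : ℕ) (a b : Matrix (Fin n) (Fin n) F),
        Algebra.adjoin F ({a, b} : Set (Matrix (Fin n) (Fin n) F)) = ⊤ ∧
        ∃ W : Submodule F (Fin n → F),
          (finrank F W : ℝ) ≤ (n : ℝ) / 2 ∧
          ((finrank F ↥(W ⊔ W.map a.mulVecLin ⊔ W.map b.mulVecLin)) : ℝ)
            < (1 + ε) * finrank F W := by
  exact free_algebra_not_tau'' F
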